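/- Let M = θ M' + (1−θ)G where G = ∇f(X) + Γ with E[Γ] = 0, E[‖Γ‖_F²] ≤ σ². Then E[‖M − ∇f(X)‖_F²] ≤ θ‖M' − ∇f(X')‖_F² + (1/(1−θ))‖∇f(X) − ∇f(X')‖_F² + (1−θ)²σ², where X' is the previous iterate and M', ∇f(X), ∇f(X') are deterministic. -/

import Mathlib

open Matrix MeasureTheory

/-- The Frobenius norm of a real matrix. -/
noncomputable def frobNorm {m n : ℕ} (A : Matrix (Fin m) (Fin n) ℝ) : ℝ :=
  Real.sqrt (∑ i, ∑ j, (A i j) ^ 2)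

lemma frobNorm_sq {m n : ℕ} (A : Matrix (Fin m) (Fin n) ℝ) :
    frobNorm A ^ 2 = ∑ i, ∑ j, (A i j) ^ 2 := by
  rw [frobNorm, Real.sq_sqrt]
  positivity

lemma young_scalar (θ b c : ℝ) (h0 : 0 < θ) (h1 : θ < 1) :
    θ ^ 2 * (b - c) ^ 2 ≤ θ * b ^ 2 + 1 / (1 - θ) * c ^ 2 := by
  have h2 : (0 : ℝ) < 1 - θ := by linarith
  have key : θ ^ 2 * (1 - θ) * (b - c) ^ 2 ≤ θ * (1 - θ) * b ^ 2 + c ^ 2 := by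
    nlinarith [mul_nonneg h0.le (sq_nonneg ((1 - θ) * b + θ * c)), sq_nonneg c,
      sq_nonneg (θ * c), mul_nonneg (mul_nonneg h0.le h2.le) (sq_nonneg c)]
  calc θ ^ 2 * (b - c) ^ 2 = (θ ^ 2 * (1 - θ) * (b - c) ^ 2) / (1 - θ) := by
        field_simp
    _ ≤ (θ * (1 - θ) * b ^ 2 + c ^ 2) / (1 - θ) := by gcongr
    _ = θ * b ^ 2 + 1 / (1 - θ) * c ^ 2 := by field_simp

/-- Momentum error recursion: with `M = θM' + (1−θ)(∇f(X) + Γ)`, `E[Γ] = 0`,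
`E[‖Γ‖_F²] ≤ σ²`, we have
`E[‖M − ∇f(X)‖_F²] ≤ θ‖M' − ∇f(X')‖_F² + (1/(1−θ))‖∇f(X) − ∇f(X')‖_F² + (1−θ)²σ²`. -/
theorem momentum_error_recursion {m n : ℕ}
    {Ω : Type*} [MeasurableSpace Ω] (μ : Measure Ω) [IsProbabilityMeasure μ]
    (θ σ : ℝ) (hθ : θ ∈ Set.Ioo (0 : ℝ) 1) (hσ : 0 ≤ σ)
    (M' Fx Fx' : Matrix (Fin m) (Fin n) ℝ)
    (Γ : Ω → Matrix (Fin m) (Fin n) ℝ)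
    (hΓ_int : ∀ i j, Integrable (fun ω => Γ ω i j) μ)
    (hΓ_sq_int : Integrable (fun ω => (frobNorm (Γ ω)) ^ 2) μ)
    (hΓ_mean : ∀ i j, ∫ ω, Γ ω i j ∂μ = 0)
    (hΓ_var : ∫ ω, (frobNorm (Γ ω)) ^ 2 ∂μ ≤ σ ^ 2)
    (M : Ω → Matrix (Fin m) (Fin n) ℝ)
    (hM : ∀ ω, M ω = θ • M' + (1 - θ) • (Fx + Γ ω)) :
    ∫ ω, (frobNorm (M ω - Fx)) ^ 2 ∂μ
      ≤ θ * (frobNorm (M' - Fx')) ^ 2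
        + 1 / (1 - θ) * (frobNorm (Fx - Fx')) ^ 2
        + (1 - θ) ^ 2 * σ ^ 2 := by
  obtain ⟨h0, h1⟩ := hθ
  have h2 : (0 : ℝ) < 1 - θ := by linarith
  set A := M' - Fx with hA
  have hentry : ∀ ω i j, (M ω - Fx) i j = θ * A i j + (1 - θ) * Γ ω i j := by
    intro ω i j
    simp [hM ω, hA, Matrix.sub_apply, Matrix.add_apply, Matrix.smul_apply, smul_eq_mul]
    ring
  have hΓsq_entry : ∀ ω (i : Fin m) (j : Fin n), (Γ ω i j) ^ 2 ≤ frobNorm (Γ ω) ^ 2 := by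
    intro ω i j
    rw [frobNorm_sq]
    calc (Γ ω i j) ^ 2 ≤ ∑ j', (Γ ω i j') ^ 2 :=
          Finset.single_le_sum (f := fun j' => (Γ ω i j') ^ 2)
            (fun _ _ => sq_nonneg _) (Finset.mem_univ j)
      _ ≤ ∑ i', ∑ j', (Γ ω i' j') ^ 2 :=
          Finset.single_le_sum (f := fun i' => ∑ j', (Γ ω i' j') ^ 2)
            (fun _ _ => Finset.sum_nonneg fun _ _ => sq_nonneg _) (Finset.mem_univ i)
  have hΓsq : ∀ i j, Integrable (fun ω => (Γ ω i j) ^ 2) μ := by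
    intro i j
    refine hΓ_sq_int.mono' ?_ ?_
    · have hm := (hΓ_int i j).aestronglyMeasurable
      have : (fun ω => (Γ ω i j) ^ 2) = fun ω => Γ ω i j * Γ ω i j := by
        funext ω; ring
      rw [this]; exact hm.mul hm
    · filter_upwards with ω
      rw [Real.norm_eq_abs, abs_of_nonneg (sq_nonneg _)]
      exact hΓsq_entry ω i j
  have hf_int : ∀ i j, Integrable (fun ω => (θ * A i j + (1 - θ) * Γ ω i j) ^ 2) μ := by
    intro i j
    have : (fun ω => (θ * A i j + (1 - θ) * Γ ω i j) ^ 2)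
        = fun ω => (θ * A i j) ^ 2
            + ((2 * θ * (1 - θ) * A i j) * Γ ω i j + (1 - θ) ^ 2 * (Γ ω i j) ^ 2) := by
      funext ω; ring
    rw [this]
    exact (integrable_const _).add (((hΓ_int i j).const_mul _).add ((hΓsq i j).const_mul _))
  have hf_val : ∀ i j, ∫ ω, (θ * A i j + (1 - θ) * Γ ω i j) ^ 2 ∂μ
      = θ ^ 2 * (A i j) ^ 2 + (1 - θ) ^ 2 * ∫ ω, (Γ ω i j) ^ 2 ∂μ := by
    intro i j
    have h : (fun ω => (θ * A i j + (1 - θ) * Γ ω i j) ^ 2)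
        = fun ω => (θ * A i j) ^ 2
            + ((2 * θ * (1 - θ) * A i j) * Γ ω i j + (1 - θ) ^ 2 * (Γ ω i j) ^ 2) := by
      funext ω; ring
    have hg1 : Integrable (fun ω => 2 * θ * (1 - θ) * A i j * Γ ω i j) μ :=
      (hΓ_int i j).const_mul _
    have hg2 : Integrable (fun ω => (1 - θ) ^ 2 * (Γ ω i j) ^ 2) μ :=
      (hΓsq i j).const_mul _
    have hg : Integrable
        (fun ω => 2 * θ * (1 - θ) * A i j * Γ ω i j + (1 - θ) ^ 2 * (Γ ω i j) ^ 2) μ :=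
      hg1.add hg2
    rw [h, integral_add (integrable_const _) hg, integral_add hg1 hg2,
      integral_const_mul, integral_const_mul, hΓ_mean i j, integral_const]
    simp
    ring
  have hsum : ∫ ω, (frobNorm (Γ ω)) ^ 2 ∂μ = ∑ i, ∑ j, ∫ ω, (Γ ω i j) ^ 2 ∂μ := by
    rw [show (fun ω => (frobNorm (Γ ω)) ^ 2) = fun ω => ∑ i, ∑ j, (Γ ω i j) ^ 2 from
        funext fun ω => frobNorm_sq _,
      integral_finset_sum _ (fun i _ => integrable_finset_sum _ fun j _ => hΓsq i j)]
    exact Finset.sum_congr rfl fun i _ => integral_finset_sum _ fun j _ => hΓsq i j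
  have hmain : ∫ ω, (frobNorm (M ω - Fx)) ^ 2 ∂μ
      = θ ^ 2 * (∑ i, ∑ j, (A i j) ^ 2) + (1 - θ) ^ 2 * ∫ ω, (frobNorm (Γ ω)) ^ 2 ∂μ := by
    have h1' : (fun ω => (frobNorm (M ω - Fx)) ^ 2)
        = fun ω => ∑ i, ∑ j, (θ * A i j + (1 - θ) * Γ ω i j) ^ 2 := by
      funext ω
      rw [frobNorm_sq]
      exact Finset.sum_congr rfl fun i _ => Finset.sum_congr rfl fun j _ => by rw [hentry]
    rw [h1',
      integral_finset_sum _ (fun i _ => integrable_finset_sum _ (fun j _ => hf_int i j))]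
    have hrow : ∀ i : Fin m, ∫ ω, ∑ j, (θ * A i j + (1 - θ) * Γ ω i j) ^ 2 ∂μ
        = ∑ j, (θ ^ 2 * (A i j) ^ 2 + (1 - θ) ^ 2 * ∫ ω, (Γ ω i j) ^ 2 ∂μ) := by
      intro i
      rw [integral_finset_sum _ (fun j _ => hf_int i j)]
      exact Finset.sum_congr rfl fun j _ => hf_val i j
    rw [Finset.sum_congr rfl fun i _ => hrow i, hsum]
    simp only [Finset.sum_add_distrib, Finset.mul_sum]
  have hdet : θ ^ 2 * (∑ i, ∑ j, (A i j) ^ 2)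
      ≤ θ * (frobNorm (M' - Fx')) ^ 2 + 1 / (1 - θ) * (frobNorm (Fx - Fx')) ^ 2 := by
    rw [frobNorm_sq, frobNorm_sq]
    simp only [Finset.mul_sum, ← Finset.sum_add_distrib]
    refine Finset.sum_le_sum fun i _ => Finset.sum_le_sum fun j _ => ?_
    have hAij : A i j = (M' - Fx') i j - (Fx - Fx') i j := by
      simp [hA, Matrix.sub_apply]
    rw [hAij]
    exact young_scalar θ _ _ h0 h1
  have hvar : (1 - θ) ^ 2 * ∫ ω, (frobNorm (Γ ω)) ^ 2 ∂μ ≤ (1 - θ) ^ 2 * σ ^ 2 :=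
    mul_le_mul_of_nonneg_left hΓ_var (sq_nonneg _)
  rw [hmain]
  linarith
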